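/- Let p : ℝ^ℕ → ℝ^{2n+2} be the projection onto the first 2n+2 coordinates and let X(n) ⊆ ℝ^ℕ be the set of sequences with at most 2n nonzero coordinates. Then for every finite set A ⊆ ℝ^ℕ, the set p(A + X(n)) is not all of ℝ^{2n+2}. -/
import Mathlib


open Pointwise MeasureTheory

lemma hyperplane_null {m : ℕ} (j : Fin m) (c : ℝ) :
    volume {g : Fin m → ℝ | g j = c} = 0 := by
  have : {g : Fin m → ℝ | g j = c} =
      (AffineSubspace.mk' (fun _ => c) (LinearMap.ker (LinearMap.proj j)) :
        AffineSubspace ℝ (Fin m → ℝ)) := by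
    ext g
    rw [Set.mem_setOf_eq, SetLike.mem_coe, AffineSubspace.mem_mk']
    simp [LinearMap.mem_ker, sub_eq_zero]
  rw [this]
  apply Measure.addHaar_affineSubspace
  intro h
  have hd : (AffineSubspace.mk' (fun _ => c)
      (LinearMap.ker (LinearMap.proj j)) : AffineSubspace ℝ (Fin m → ℝ)).direction = ⊤ := by
    rw [h]; exact AffineSubspace.direction_top ℝ _ _
  rw [AffineSubspace.direction_mk'] at hd
  have : (Pi.single j 1 : Fin m → ℝ) ∈ LinearMap.ker (LinearMap.proj (R := ℝ)
      (φ := fun _ : Fin m => ℝ) j) := by rw [hd]; trivial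
  simp [LinearMap.mem_ker] at this

/-- Sequences with at most `2n` nonzero coordinates. -/
def fewCoord (n : ℕ) : Set (ℕ → ℝ) :=
  {f | ∃ s : Finset ℕ, s.card ≤ 2 * n ∧ ∀ j ∉ s, f j = 0}

theorem stmt6 (n : ℕ) (A : Set (ℕ → ℝ)) (hA : A.Finite) :
    (fun f : ℕ → ℝ => fun i : Fin (2 * n + 2) => f i) '' (A + fewCoord n) ≠
      Set.univ := by
  set S : Set (Fin (2 * n + 2) → ℝ) :=
    ⋃ a ∈ A, ⋃ j : Fin (2 * n + 2), {g | g j = a (j : ℕ)} with hS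
  have hsub : (fun f : ℕ → ℝ => fun i : Fin (2 * n + 2) => f i) '' (A + fewCoord n) ⊆ S := by
    rintro g ⟨f, hf, rfl⟩
    obtain ⟨a, ha, x, hx, rfl⟩ := hf
    obtain ⟨s, hcard, hs⟩ := hx
    -- find j : Fin (2n+2) with (j : ℕ) ∉ s
    have : ∃ j : Fin (2 * n + 2), (j : ℕ) ∉ s := by
      by_contra h
      push_neg at h
      have : (Finset.univ.image (fun j : Fin (2 * n + 2) => (j : ℕ))) ⊆ s :=
        by intro x hx; simp at hx; obtain ⟨j, rfl⟩ := hx; exact h j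
      have hle := Finset.card_le_card this
      rw [Finset.card_image_of_injective _ Fin.val_injective, Finset.card_univ,
        Fintype.card_fin] at hle
      omega
    obtain ⟨j, hj⟩ := this
    refine Set.mem_biUnion ha (Set.mem_iUnion.2 ⟨j, ?_⟩)
    simp [hs _ hj]
  intro h
  have hnull : volume S = 0 := by
    rw [hS]
    refine (measure_biUnion_null_iff hA.countable).2 fun a _ => ?_
    exact measure_iUnion_null fun j => hyperplane_null j (a (j : ℕ))
  have : volume (Set.univ : Set (Fin (2 * n + 2) → ℝ)) = 0 :=
    measure_mono_null (h ▸ hsub) hnull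
  exact isOpen_univ.measure_ne_zero volume Set.univ_nonempty this
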